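/- Along a Finsler submanifold, the horizontal vector field δ/δu^α decomposes as δ/δu^α = B^i_α δ/δx^i + H^a_α 𝔑_a^V, where H^a_α = 𝔑̃^a_i(B^i_{α0} + B^j_α Ñ^i_j) and 𝔑_a^V = θ̃⁻¹(𝔑_a) is the vertical correspondent of the normal frame field 𝔑_a. -/
import Mathlib


/-- Along a Finsler submanifold, the horizontal field `δ/δu^α` (pushed forward to `TTM̃₀`,
written in the coordinates `(dx-components, dy-components)`) decomposes as
`δ/δu^α = B^i_α δ/δx^i + H^a_α 𝔑_a^V`, where `H^a_α = 𝔑̃^a_i (B^i_{α0} + B^j_α Ñ^i_j)` and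
`𝔑_a^V = θ̃⁻¹(𝔑_a)` is the vertical correspondent (dy-components `𝔑^i_a`) of `𝔑_a`. -/
theorem stmt11 {m n : ℕ}
    (B : Fin (m + n) → Fin m → ℝ)              -- B^i_α
    (B2 : Fin (m + n) → Fin m → Fin m → ℝ)     -- B^i_{αλ}
    (Ntil : Fin (m + n) → Fin (m + n) → ℝ)     -- Ñ^i_j
    (Bt : Fin m → Fin (m + n) → ℝ)             -- B̃^α_i
    (NN : Fin (m + n) → Fin n → ℝ)             -- 𝔑^i_a
    (NNt : Fin n → Fin (m + n) → ℝ)            -- 𝔑̃^a_i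
    (v : Fin m → ℝ)
    -- [B̃; 𝔑̃] inverts [B, 𝔑]:
    (hinv : ∀ i j : Fin (m + n),
      (∑ lam, B i lam * Bt lam j) + ∑ a, NN i a * NNt a j = if i = j then 1 else 0)
    (B0 : Fin (m + n) → Fin m → ℝ)
    (hB0 : ∀ i α, B0 i α = ∑ lam, B2 i α lam * v lam)
    (N : Fin m → Fin m → ℝ)
    (hN : ∀ lam α, N lam α = ∑ i, Bt lam i * (B0 i α + ∑ j, Ntil i j * B j α))
    (H : Fin n → Fin m → ℝ)
    (hH : ∀ a α, H a α = ∑ i, NNt a i * (B0 i α + ∑ j, Ntil i j * B j α)) :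
    ∀ α : Fin m,
      -- δ/δu^α, as the pair (dx-components, dy-components), equals B^i_α δ/δx^i + H^a_α 𝔑_a^V:
      ((fun i => B i α, fun i => B0 i α - ∑ lam, B i lam * N lam α) :
          (Fin (m + n) → ℝ) × (Fin (m + n) → ℝ)) =
        (fun i => B i α, fun i => -∑ j, Ntil i j * B j α + ∑ a, H a α * NN i a) := by
  intro α
  have key : ∀ i : Fin (m + n),
      B0 i α - ∑ lam, B i lam * N lam α =
        -∑ j, Ntil i j * B j α + ∑ a, H a α * NN i a := by
    intro i
    set C : Fin (m + n) → ℝ := fun k => B0 k α + ∑ j, Ntil k j * B j α with hC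
    have h1 : ∑ lam, B i lam * N lam α = ∑ k, (∑ lam, B i lam * Bt lam k) * C k := by
      simp only [hN, Finset.mul_sum, Finset.sum_mul, hC]
      rw [Finset.sum_comm]
      congr 1; ext k; congr 1; ext lam; ring
    have h2 : ∑ a, H a α * NN i a = ∑ k, (∑ a, NN i a * NNt a k) * C k := by
      simp only [hH, Finset.mul_sum, Finset.sum_mul, hC]
      rw [Finset.sum_comm]
      congr 1; ext k; congr 1; ext a; ring
    have h3 : ∑ k, ((∑ lam, B i lam * Bt lam k) + ∑ a, NN i a * NNt a k) * C k = C i := by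
      simp only [hinv]
      simp [Finset.sum_ite_eq, ite_mul]
    rw [h1, h2]
    have h4 : (∑ k, (∑ lam, B i lam * Bt lam k) * C k)
        + ∑ k, (∑ a, NN i a * NNt a k) * C k = C i := by
      rw [← Finset.sum_add_distrib]
      simpa [add_mul] using h3
    have h5 : C i = B0 i α + ∑ j, Ntil i j * B j α := rfl
    linarith
  exact Prod.ext rfl (funext key)
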